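/- Let (A, B) be a two-player weighted potential game with potential φ and weights w₁, w₂ > 0, and let (x, y) be a trajectory of the two-player SQL dynamics for parameters α₁, α₂ ∈ [0,1), β₁, β₂ > 0. Assume in addition that the closure of the set {(x(t), y(t)) : t ≥ 0} consists only of pairs (x*, y*) with x*_i > 0 for all i and y*_j > 0 for all j. Then the ω-limit set Ω of the curve t ↦ (x(t), y(t)) (with respect to the filter atTop on ℝ) is nonempty, compact, and connected, and every (x*, y*) ∈ Ω is a fixed point of the SQL vector field, i.e., a quantal response equilibrium: for every i, β₁((A y*)_i − ∑_{i',j} x*_{i'} A_{i'j} y*_j) = α₁(ln x*_i − ∑_{i'} x*_{i'} ln x*_{i'}), and for every j, β₂((x*ᵀ B)_j − ∑_{i,j'} x*_i B_{ij'} y*_{j'}) = α₂(ln y*_j − ∑_{j'} y*_{j'} ln y*_{j'}). -/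

import Mathlib

open Filter Real

/-- The ω-limit set of a curve `z : ℝ → X` with respect to the filter `atTop`. -/
def curveOmegaLimit {X : Type*} [TopologicalSpace X] (z : ℝ → X) : Set X :=
  omegaLimit Filter.atTop (fun t (_ : Unit) => z t) Set.univ

open Set

section Player
variable {ι₁ ι₂ : Type*} [Fintype ι₁] [Fintype ι₂]

/-- Per-player "utility" field. -/
noncomputable def uu (β w α : ℝ) (φ : ι₁ → ι₂ → ℝ) (q : (ι₁ → ℝ) × (ι₂ → ℝ)) (i : ι₁) : ℝ :=
  β * w * (∑ j, φ i j * q.2 j) - α * Real.log (q.1 i)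

/-- Per-player replicator-like vector field in centered form. -/
noncomputable def gg (β w α : ℝ) (φ : ι₁ → ι₂ → ℝ) (q : (ι₁ → ℝ) × (ι₂ → ℝ)) (i : ι₁) : ℝ :=
  q.1 i * (uu β w α φ q i - ∑ i', q.1 i' * uu β w α φ q i')

/-- Per-player dissipation term. -/
noncomputable def GG1 (β w α : ℝ) (φ : ι₁ → ι₂ → ℝ) (q : (ι₁ → ℝ) × (ι₂ → ℝ)) : ℝ :=
  ∑ i, q.1 i * (uu β w α φ q i - ∑ i', q.1 i' * uu β w α φ q i') ^ 2

lemma continuousAt_uu (β w α : ℝ) (φ : ι₁ → ι₂ → ℝ) (q0 : (ι₁ → ℝ) × (ι₂ → ℝ))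
    (h : ∀ i, q0.1 i ≠ 0) (i : ι₁) : ContinuousAt (fun q => uu β w α φ q i) q0 := by
  apply ContinuousAt.sub
  · exact (continuous_const.mul (continuous_finset_sum _ fun j _ =>
      continuous_const.mul ((continuous_apply j).comp continuous_snd))).continuousAt
  · have hc : ContinuousAt (fun q : (ι₁ → ℝ) × (ι₂ → ℝ) => q.1 i) q0 :=
      ((continuous_apply i).comp continuous_fst).continuousAt
    exact continuousAt_const.mul (hc.log (h i))

lemma continuousAt_usum (β w α : ℝ) (φ : ι₁ → ι₂ → ℝ) (q0 : (ι₁ → ℝ) × (ι₂ → ℝ))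
    (h : ∀ i, q0.1 i ≠ 0) :
    ContinuousAt (fun q => ∑ i', q.1 i' * uu β w α φ q i') q0 := by
  exact tendsto_finset_sum _ fun i _ =>
    (((continuous_apply i).comp continuous_fst).continuousAt).mul (continuousAt_uu β w α φ q0 h i)

lemma continuousAt_gg (β w α : ℝ) (φ : ι₁ → ι₂ → ℝ) (q0 : (ι₁ → ℝ) × (ι₂ → ℝ))
    (h : ∀ i, q0.1 i ≠ 0) (i : ι₁) : ContinuousAt (fun q => gg β w α φ q i) q0 := by
  exact (((continuous_apply i).comp continuous_fst).continuousAt).mul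
    ((continuousAt_uu β w α φ q0 h i).sub (continuousAt_usum β w α φ q0 h))

lemma continuousAt_GG1 (β w α : ℝ) (φ : ι₁ → ι₂ → ℝ) (q0 : (ι₁ → ℝ) × (ι₂ → ℝ))
    (h : ∀ i, q0.1 i ≠ 0) : ContinuousAt (fun q => GG1 β w α φ q) q0 := by
  exact tendsto_finset_sum _ fun i _ =>
    (((continuous_apply i).comp continuous_fst).continuousAt).mul
      (((continuousAt_uu β w α φ q0 h i).sub (continuousAt_usum β w α φ q0 h)).pow 2)

lemma GG1_nonneg (β w α : ℝ) (φ : ι₁ → ι₂ → ℝ) (q : (ι₁ → ℝ) × (ι₂ → ℝ))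
    (h : ∀ i, 0 ≤ q.1 i) : 0 ≤ GG1 β w α φ q :=
  Finset.sum_nonneg fun i _ => mul_nonneg (h i) (sq_nonneg _)

lemma continuousAt_gg_swap (β w α : ℝ) (φ' : ι₂ → ι₁ → ℝ) (q0 : (ι₁ → ℝ) × (ι₂ → ℝ))
    (h : ∀ j, q0.2 j ≠ 0) (j : ι₂) :
    ContinuousAt (fun q : (ι₁ → ℝ) × (ι₂ → ℝ) => gg β w α φ' q.swap j) q0 :=
  (continuousAt_gg β w α φ' q0.swap (fun j => h j) j).comp continuous_swap.continuousAt

lemma continuousAt_GG1_swap (β w α : ℝ) (φ' : ι₂ → ι₁ → ℝ) (q0 : (ι₁ → ℝ) × (ι₂ → ℝ))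
    (h : ∀ j, q0.2 j ≠ 0) :
    ContinuousAt (fun q : (ι₁ → ℝ) × (ι₂ → ℝ) => GG1 β w α φ' q.swap) q0 :=
  (continuousAt_GG1 β w α φ' q0.swap (fun j => h j)).comp continuous_swap.continuousAt

end Player


/-- image2 over Unit is just an image. -/
lemma image2_unit_eq {β : Type*} (z : ℝ → β) (u : Set ℝ) :
    Set.image2 (fun t (_ : Unit) => z t) u Set.univ = z '' u := by
  ext b; simp [Set.mem_image2]

/-- Weighted sum of centered values equals zero. -/
lemma sum_center_zero {ι : Type*} [Fintype ι] (p u : ι → ℝ) (hp : ∑ i, p i = 1) :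
    ∑ i, p i * (u i - ∑ i', p i' * u i') = 0 := by
  simp only [mul_sub, Finset.sum_sub_distrib, ← Finset.sum_mul, hp, one_mul, sub_self]

/-- Weighted variance identity. -/
lemma sum_center_sq {ι : Type*} [Fintype ι] (p u : ι → ℝ) (hp : ∑ i, p i = 1) :
    ∑ i, (p i * (u i - ∑ i', p i' * u i')) * u i
      = ∑ i, p i * (u i - ∑ i', p i' * u i') ^ 2 := by
  set c := ∑ i', p i' * u i' with hc
  have h : ∀ i, (p i * (u i - c)) * u i = p i * (u i - c) ^ 2 + c * (p i * (u i - c)) := by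
    intro i; ring
  rw [Finset.sum_congr rfl fun i _ => h i, Finset.sum_add_distrib, ← Finset.mul_sum,
    sum_center_zero p u hp, mul_zero, add_zero]

/-- Potential reduction: advantage differences reduce to potential differences. -/
lemma potential_reduce {ι₁ ι₂ : Type*} [Fintype ι₁] [Fintype ι₂]
    (w : ℝ) (A φ : ι₁ → ι₂ → ℝ) (p : ι₁ → ℝ) (r : ι₂ → ℝ) (hp : ∑ i, p i = 1)
    (hpot : ∀ i i' j, A i j - A i' j = w * (φ i j - φ i' j)) (i : ι₁) :
    (∑ j, A i j * r j) - ∑ i', ∑ j, p i' * A i' j * r j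
      = w * ((∑ j, φ i j * r j) - ∑ i', ∑ j, p i' * φ i' j * r j) := by
  have key : ∀ i', (∑ j, A i j * r j) - (∑ j, A i' j * r j)
      = w * ((∑ j, φ i j * r j) - (∑ j, φ i' j * r j)) := by
    intro i'
    rw [← Finset.sum_sub_distrib, ← Finset.sum_sub_distrib, Finset.mul_sum]
    refine Finset.sum_congr rfl fun j _ => ?_
    rw [← sub_mul, hpot i i' j]; ring
  have h1 : ∀ (C : ι₁ → ι₂ → ℝ), ∑ i', ∑ j, p i' * C i' j * r j
      = ∑ i', p i' * ∑ j, C i' j * r j := by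
    intro C
    refine Finset.sum_congr rfl fun i' _ => ?_
    rw [Finset.mul_sum]
    exact Finset.sum_congr rfl fun j _ => by ring
  rw [h1, h1]
  have h2 : (∑ j, A i j * r j) - ∑ i', p i' * ∑ j, A i' j * r j
      = ∑ i', p i' * ((∑ j, A i j * r j) - ∑ j, A i' j * r j) := by
    simp only [mul_sub, Finset.sum_sub_distrib, ← Finset.sum_mul, hp, one_mul]
  rw [h2, Finset.sum_congr rfl fun i' _ => by rw [key i']]
  simp only [mul_sub, Finset.sum_sub_distrib, mul_left_comm, ← Finset.mul_sum, ← Finset.sum_mul,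
    hp, one_mul]

/-- Rewrite the SQL vector field in potential/centered form. -/
lemma player_g_form {ι₁ ι₂ : Type*} [Fintype ι₁] [Fintype ι₂]
    (β w α : ℝ) (A φ : ι₁ → ι₂ → ℝ) (p : ι₁ → ℝ) (r : ι₂ → ℝ) (hp : ∑ i, p i = 1)
    (hpot : ∀ i i' j, A i j - A i' j = w * (φ i j - φ i' j)) (i : ι₁) :
    β * ((∑ j, A i j * r j) - ∑ i', ∑ j, p i' * A i' j * r j)
      - α * (Real.log (p i) - ∑ i', p i' * Real.log (p i'))
    = (β * w * (∑ j, φ i j * r j) - α * Real.log (p i))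
      - ∑ i', p i' * (β * w * (∑ j, φ i' j * r j) - α * Real.log (p i')) := by
  rw [potential_reduce w A φ p r hp hpot i]
  have h1 : ∀ (C : ι₁ → ι₂ → ℝ), ∑ i', ∑ j, p i' * C i' j * r j
      = ∑ i', p i' * ∑ j, C i' j * r j := by
    intro C
    refine Finset.sum_congr rfl fun i' _ => ?_
    rw [Finset.mul_sum]
    exact Finset.sum_congr rfl fun j _ => by ring
  rw [h1]
  have h3 : ∑ i', p i' * (β * w * (∑ j, φ i' j * r j) - α * Real.log (p i'))
      = β * w * (∑ i', p i' * ∑ j, φ i' j * r j) - α * ∑ i', p i' * Real.log (p i') := by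
    simp only [mul_sub, Finset.sum_sub_distrib]
    congr 1
    · rw [Finset.mul_sum]; exact Finset.sum_congr rfl fun i' _ => by ring
    · rw [Finset.mul_sum]; exact Finset.sum_congr rfl fun i' _ => by ring
  rw [h3]; ring


/-- Decreasing intersection of nonempty compact connected sets in a T2 space is connected. -/
lemma isConnected_iInter_seq {X : Type*} [TopologicalSpace X] [T2Space X]
    (C : ℕ → Set X) (hcomp : ∀ n, IsCompact (C n)) (hconn : ∀ n, IsConnected (C n))
    (hanti : ∀ n, C (n + 1) ⊆ C n) : IsConnected (⋂ n, C n) := by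
  have hcl : ∀ n, IsClosed (C n) := fun n => (hcomp n).isClosed
  have hΩne : (⋂ n, C n).Nonempty :=
    IsCompact.nonempty_iInter_of_sequence_nonempty_isCompact_isClosed C hanti
      (fun n => (hconn n).nonempty) (hcomp 0) hcl
  have hΩsub : ∀ n, (⋂ m, C m) ⊆ C n := fun n => iInter_subset C n
  have hΩcl : IsClosed (⋂ n, C n) := isClosed_iInter hcl
  have hΩcomp : IsCompact (⋂ n, C n) := (hcomp 0).of_isClosed_subset hΩcl (hΩsub 0)
  have hmono : ∀ m n, m ≤ n → C n ⊆ C m := by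
    intro m n hmn
    induction n, hmn using Nat.le_induction with
    | base => exact subset_rfl
    | succ n hmn ih => exact (hanti n).trans ih
  refine ⟨hΩne, ?_⟩
  intro U V hU hV hcover ⟨a, haΩ, haU⟩ ⟨b, hbΩ, hbV⟩
  by_contra hne
  rw [not_nonempty_iff_eq_empty] at hne
  -- the two pieces
  have hdisj : Disjoint ((⋂ n, C n) \ V) ((⋂ n, C n) \ U) := by
    refine Set.disjoint_left.2 fun q hq hq' => ?_
    rcases hcover hq.1 with h | h
    · exact hq'.2 h
    · exact hq.2 h
  have hc1 : IsCompact ((⋂ n, C n) \ V) :=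
    hΩcomp.of_isClosed_subset (hΩcl.sdiff hV) diff_subset
  have hc2 : IsCompact ((⋂ n, C n) \ U) :=
    hΩcomp.of_isClosed_subset (hΩcl.sdiff hU) diff_subset
  obtain ⟨U', V', hU', hV', hsub1, hsub2, hUV'⟩ :=
    SeparatedNhds.of_isCompact_isCompact hc1 hc2 hdisj
  -- some C n is inside U' ∪ V'
  have hΩUV : (⋂ n, C n) ⊆ U' ∪ V' := by
    intro q hq
    by_cases hqV : q ∈ V
    · by_cases hqU : q ∈ U
      · exfalso
        have : q ∈ (⋂ n, C n) ∩ (U ∩ V) := ⟨hq, hqU, hqV⟩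
        rw [hne] at this
        exact this
      · exact Or.inr (hsub2 ⟨hq, hqU⟩)
    · exact Or.inl (hsub1 ⟨hq, hqV⟩)
  have hex : ∃ n, C n ⊆ U' ∪ V' := by
    by_contra hnex
    push_neg at hnex
    have hne' : ∀ n, (C n \ (U' ∪ V')).Nonempty := by
      intro n
      rcases not_subset.1 (hnex n) with ⟨q, hq1, hq2⟩
      exact ⟨q, hq1, hq2⟩
    have : (⋂ n, C n \ (U' ∪ V')).Nonempty :=
      IsCompact.nonempty_iInter_of_sequence_nonempty_isCompact_isClosed _
        (fun n => diff_subset_diff_left (hanti n)) hne'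
        ((hcomp 0).of_isClosed_subset ((hcl 0).sdiff (hU'.union hV')) diff_subset)
        (fun n => (hcl n).sdiff (hU'.union hV'))
    obtain ⟨q, hq⟩ := this
    simp only [mem_iInter, mem_diff] at hq
    exact (hq 0).2 (hΩUV (mem_iInter.2 fun n => (hq n).1))
  obtain ⟨n, hn⟩ := hex
  have hnotmem : ∀ q, q ∈ (⋂ m, C m) → q ∈ U → q ∈ V → False := by
    intro q h1 h2 h3
    have : q ∈ (⋂ m, C m) ∩ (U ∩ V) := ⟨h1, h2, h3⟩
    rw [hne] at this
    exact this
  have haU' : a ∈ C n ∩ U' :=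
    ⟨hΩsub n haΩ, hsub1 ⟨haΩ, fun hV => hnotmem a haΩ haU hV⟩⟩
  have hbV' : b ∈ C n ∩ V' :=
    ⟨hΩsub n hbΩ, hsub2 ⟨hbΩ, fun hU => hnotmem b hbΩ hU hbV⟩⟩
  obtain ⟨q, hq⟩ := (hconn n).isPreconnected U' V' hU' hV' hn ⟨a, haU'⟩ ⟨b, hbV'⟩
  exact Set.disjoint_left.1 hUV' hq.2.1 hq.2.2

/-- **Convergence of two-player SQL dynamics to QRE in weighted potential games.**
For a trajectory `(x, y)` of the two-player smooth Q-learning dynamics in a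
weighted potential game with potential `φ` and weights `w₁, w₂ > 0`, whose
closure stays in the interior of the product of simplices, the ω-limit set of
the curve `t ↦ (x t, y t)` is nonempty, compact and connected, and each of its
points is a quantal response equilibrium (a fixed point of the SQL vector
field). -/
theorem sql_potential_convergence_to_QRE
    {ι₁ ι₂ : Type*} [Fintype ι₁] [Fintype ι₂] [Nonempty ι₁] [Nonempty ι₂]
    (A B φ : ι₁ → ι₂ → ℝ) (w₁ w₂ : ℝ) (hw₁ : 0 < w₁) (hw₂ : 0 < w₂)
    (hpotA : ∀ i i' j, A i j - A i' j = w₁ * (φ i j - φ i' j))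
    (hpotB : ∀ i j j', B i j - B i j' = w₂ * (φ i j - φ i j'))
    (α₁ α₂ β₁ β₂ : ℝ)
    (hα₁₀ : 0 ≤ α₁) (hα₁₁ : α₁ < 1) (hα₂₀ : 0 ≤ α₂) (hα₂₁ : α₂ < 1)
    (hβ₁ : 0 < β₁) (hβ₂ : 0 < β₂)
    (x : ℝ → ι₁ → ℝ) (y : ℝ → ι₂ → ℝ)
    (hxdiff : ∀ i, Differentiable ℝ fun t => x t i)
    (hydiff : ∀ j, Differentiable ℝ fun t => y t j)
    (hxpos : ∀ t ≥ (0 : ℝ), ∀ i, 0 < x t i)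
    (hypos : ∀ t ≥ (0 : ℝ), ∀ j, 0 < y t j)
    (hxsum : ∀ t ≥ (0 : ℝ), ∑ i, x t i = 1)
    (hysum : ∀ t ≥ (0 : ℝ), ∑ j, y t j = 1)
    (hodex : ∀ t ≥ (0 : ℝ), ∀ i, deriv (fun s => x s i) t =
      x t i * (β₁ * ((∑ j, A i j * y t j) - ∑ i', ∑ j, x t i' * A i' j * y t j)
        - α₁ * (Real.log (x t i) - ∑ i', x t i' * Real.log (x t i'))))
    (hodey : ∀ t ≥ (0 : ℝ), ∀ j, deriv (fun s => y s j) t =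
      y t j * (β₂ * ((∑ i, x t i * B i j) - ∑ i, ∑ j', x t i * B i j' * y t j')
        - α₂ * (Real.log (y t j) - ∑ j', y t j' * Real.log (y t j'))))
    (hclosure : ∀ z ∈ closure {q : (ι₁ → ℝ) × (ι₂ → ℝ) | ∃ t ≥ (0 : ℝ), q = (x t, y t)},
      (∀ i, 0 < z.1 i) ∧ (∀ j, 0 < z.2 j)) :
    (curveOmegaLimit (fun t => ((x t, y t) : (ι₁ → ℝ) × (ι₂ → ℝ)))).Nonempty ∧
    IsCompact (curveOmegaLimit (fun t => ((x t, y t) : (ι₁ → ℝ) × (ι₂ → ℝ)))) ∧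
    IsConnected (curveOmegaLimit (fun t => ((x t, y t) : (ι₁ → ℝ) × (ι₂ → ℝ)))) ∧
    (∀ z ∈ curveOmegaLimit (fun t => ((x t, y t) : (ι₁ → ℝ) × (ι₂ → ℝ))),
      (∀ i, β₁ * ((∑ j, A i j * z.2 j) - ∑ i', ∑ j, z.1 i' * A i' j * z.2 j)
        = α₁ * (Real.log (z.1 i) - ∑ i', z.1 i' * Real.log (z.1 i'))) ∧
      (∀ j, β₂ * ((∑ i, z.1 i * B i j) - ∑ i, ∑ j', z.1 i * B i j' * z.2 j')
        = α₂ * (Real.log (z.2 j) - ∑ j', z.2 j' * Real.log (z.2 j')))) := by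
  classical
  set K := closure {q : (ι₁ → ℝ) × (ι₂ → ℝ) | ∃ t ≥ (0 : ℝ), q = (x t, y t)} with hKdef
  have hxc : ∀ i, Continuous fun t => x t i := fun i => (hxdiff i).continuous
  have hyc : ∀ j, Continuous fun t => y t j := fun j => (hydiff j).continuous
  have hzc : Continuous fun t => ((x t, y t) : (ι₁ → ℝ) × (ι₂ → ℝ)) :=
    Continuous.prodMk (continuous_pi hxc) (continuous_pi hyc)
  have hzK : ∀ t, 0 ≤ t → ((x t, y t) : (ι₁ → ℝ) × (ι₂ → ℝ)) ∈ K := fun t ht =>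
    subset_closure ⟨t, ht, rfl⟩
  have hxle : ∀ t, 0 ≤ t → ∀ i, x t i ≤ 1 := by
    intro t ht i
    calc x t i ≤ ∑ i', x t i' :=
          Finset.single_le_sum (fun i' _ => (hxpos t ht i').le) (Finset.mem_univ i)
      _ = 1 := hxsum t ht
  have hyle : ∀ t, 0 ≤ t → ∀ j, y t j ≤ 1 := by
    intro t ht j
    calc y t j ≤ ∑ j', y t j' :=
          Finset.single_le_sum (fun j' _ => (hypos t ht j').le) (Finset.mem_univ j)
      _ = 1 := hysum t ht
  -- `K` is compact
  have hKball : K ⊆ Metric.closedBall 0 1 := by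
    apply closure_minimal _ Metric.isClosed_closedBall
    rintro q ⟨t, ht, rfl⟩
    rw [Metric.mem_closedBall, dist_zero_right, Prod.norm_def]
    apply max_le
    · rw [pi_norm_le_iff_of_nonneg zero_le_one]
      intro i
      rw [Real.norm_eq_abs, abs_le]
      exact ⟨by linarith [hxpos t ht i], hxle t ht i⟩
    · rw [pi_norm_le_iff_of_nonneg zero_le_one]
      intro j
      rw [Real.norm_eq_abs, abs_le]
      exact ⟨by linarith [hypos t ht j], hyle t ht j⟩
  have hKcomp : IsCompact K :=
    Metric.isCompact_of_isClosed_isBounded isClosed_closure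
      (Metric.isBounded_closedBall.subset hKball)
  -- membership facts on `K`
  have hKpos1 : ∀ q ∈ K, ∀ i, 0 < q.1 i := fun q hq => (hclosure q hq).1
  have hKpos2 : ∀ q ∈ K, ∀ j, 0 < q.2 j := fun q hq => (hclosure q hq).2
  have hKsum1 : ∀ q ∈ K, ∑ i, q.1 i = 1 := by
    have hcl : IsClosed {q : (ι₁ → ℝ) × (ι₂ → ℝ) | ∑ i, q.1 i = 1} :=
      isClosed_eq (continuous_finset_sum _ fun i _ => (continuous_apply i).comp continuous_fst)
        continuous_const
    intro q hq
    refine closure_minimal ?_ hcl hq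
    rintro q' ⟨t, ht, rfl⟩
    exact hxsum t ht
  have hKsum2 : ∀ q ∈ K, ∑ j, q.2 j = 1 := by
    have hcl : IsClosed {q : (ι₁ → ℝ) × (ι₂ → ℝ) | ∑ j, q.2 j = 1} :=
      isClosed_eq (continuous_finset_sum _ fun j _ => (continuous_apply j).comp continuous_snd)
        continuous_const
    intro q hq
    refine closure_minimal ?_ hcl hq
    rintro q' ⟨t, ht, rfl⟩
    exact hysum t ht
  -- the ω-limit set is contained in K
  have himg : ∀ u : Set ℝ,
      Set.image2 (fun t (_ : Unit) => ((x t, y t) : (ι₁ → ℝ) × (ι₂ → ℝ))) u Set.univ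
        = (fun t => ((x t, y t) : (ι₁ → ℝ) × (ι₂ → ℝ))) '' u :=
    fun u => image2_unit_eq _ u
  have hIciK : ∀ T : ℝ, 0 ≤ T →
      closure ((fun t => ((x t, y t) : (ι₁ → ℝ) × (ι₂ → ℝ))) '' Set.Ici T) ⊆ K := by
    intro T hT
    rw [hKdef]
    apply closure_mono
    rintro q ⟨t, ht, rfl⟩
    exact ⟨t, le_trans hT ht, rfl⟩
  have hΩK : curveOmegaLimit (fun t => ((x t, y t) : (ι₁ → ℝ) × (ι₂ → ℝ))) ⊆ K := by
    have h1 := omegaLimit_subset_closure_fw_image Filter.atTop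
      (fun t (_ : Unit) => ((x t, y t) : (ι₁ → ℝ) × (ι₂ → ℝ))) Set.univ (Ici_mem_atTop (0 : ℝ))
    rw [himg] at h1
    exact h1.trans (hIciK 0 le_rfl)
  -- nonempty
  have hΩne : (curveOmegaLimit (fun t => ((x t, y t) : (ι₁ → ℝ) × (ι₂ → ℝ)))).Nonempty := by
    refine nonempty_omegaLimit_of_isCompact_absorbing _ _ _ hKcomp
      ⟨Set.Ici 0, Ici_mem_atTop 0, ?_⟩ Set.univ_nonempty
    rw [himg]
    exact hIciK 0 le_rfl
  -- compact
  have hΩcomp : IsCompact (curveOmegaLimit (fun t => ((x t, y t) : (ι₁ → ℝ) × (ι₂ → ℝ)))) :=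
    hKcomp.of_isClosed_subset (isClosed_omegaLimit _ _ _) hΩK
  -- connected
  have hΩconn : IsConnected (curveOmegaLimit (fun t => ((x t, y t) : (ι₁ → ℝ) × (ι₂ → ℝ)))) := by
    have hCeq : curveOmegaLimit (fun t => ((x t, y t) : (ι₁ → ℝ) × (ι₂ → ℝ)))
        = ⋂ n : ℕ, closure ((fun t => ((x t, y t) : (ι₁ → ℝ) × (ι₂ → ℝ))) '' Set.Ici (n : ℝ)) := by
      apply Set.Subset.antisymm
      · refine Set.subset_iInter fun n => ?_
        have h1 := omegaLimit_subset_closure_fw_image Filter.atTop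
          (fun t (_ : Unit) => ((x t, y t) : (ι₁ → ℝ) × (ι₂ → ℝ))) Set.univ
          (Ici_mem_atTop (n : ℝ))
        rwa [himg] at h1
      · intro q hq
        rw [curveOmegaLimit, omegaLimit_def]
        refine Set.mem_iInter₂.2 fun u hu => ?_
        rw [himg]
        obtain ⟨T, hT⟩ := mem_atTop_sets.1 hu
        obtain ⟨n, hn⟩ := exists_nat_ge T
        have hsub : (fun t => ((x t, y t) : (ι₁ → ℝ) × (ι₂ → ℝ))) '' Set.Ici (n : ℝ)
            ⊆ (fun t => ((x t, y t) : (ι₁ → ℝ) × (ι₂ → ℝ))) '' u :=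
          Set.image_mono fun t ht => hT t (le_trans hn ht)
        exact closure_mono hsub (Set.mem_iInter.1 hq n)
    rw [hCeq]
    apply isConnected_iInter_seq
    · intro n
      exact hKcomp.of_isClosed_subset isClosed_closure (hIciK n (Nat.cast_nonneg n))
    · intro n
      exact ((isConnected_Ici).image _ hzc.continuousOn).closure
    · intro n
      exact closure_mono (Set.image_mono (Set.Ici_subset_Ici.2 (by exact_mod_cast Nat.le_succ n)))
  -- ===== Lyapunov analysis =====
  -- the vector field, dissipation and potential functions
  set Fc : (ι₁ → ℝ) × (ι₂ → ℝ) → (ι₁ → ℝ) × (ι₂ → ℝ) := fun q =>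
    (fun i => gg β₁ w₁ α₁ φ q i, fun j => gg β₂ w₂ α₂ (fun j i => φ i j) q.swap j) with hFcdef
  set Gv : (ι₁ → ℝ) × (ι₂ → ℝ) → ℝ := fun q =>
    β₂ * w₂ * GG1 β₁ w₁ α₁ φ q + β₁ * w₁ * GG1 β₂ w₂ α₂ (fun j i => φ i j) q.swap with hGvdef
  set Vv : (ι₁ → ℝ) × (ι₂ → ℝ) → ℝ := fun q =>
    β₁ * w₁ * (β₂ * w₂) * (∑ i, ∑ j, q.1 i * φ i j * q.2 j)
      - α₁ * (β₂ * w₂) * (∑ i, q.1 i * Real.log (q.1 i))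
      - α₂ * (β₁ * w₁) * (∑ j, q.2 j * Real.log (q.2 j)) with hVvdef
  -- basic derivative facts
  have hxd : ∀ (t : ℝ) (i : ι₁), HasDerivAt (fun s => x s i) (deriv (fun s => x s i) t) t :=
    fun t i => ((hxdiff i) t).hasDerivAt
  have hyd : ∀ (t : ℝ) (j : ι₂), HasDerivAt (fun s => y s j) (deriv (fun s => y s j) t) t :=
    fun t j => ((hydiff j) t).hasDerivAt
  -- the ODE in centered form
  have hodex' : ∀ t, 0 ≤ t → ∀ i, deriv (fun s => x s i) t = gg β₁ w₁ α₁ φ (x t, y t) i := by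
    intro t ht i
    rw [hodex t ht i]
    have h := player_g_form β₁ w₁ α₁ A φ (x t) (y t) (hxsum t ht) hpotA i
    simp only [gg, uu]
    rw [h]
  have hodey' : ∀ t, 0 ≤ t → ∀ j, deriv (fun s => y s j) t
      = gg β₂ w₂ α₂ (fun j i => φ i j) (y t, x t) j := by
    intro t ht j
    rw [hodey t ht j]
    have h := player_g_form β₂ w₂ α₂ (fun j i => B i j) (fun j i => φ i j) (y t) (x t)
      (hysum t ht) (fun j j' i => hpotB i j j') j
    have e1 : ∑ i, B i j * x t i = ∑ i, x t i * B i j :=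
      Finset.sum_congr rfl fun i _ => mul_comm _ _
    have e2 : ∑ j', ∑ i, y t j' * B i j' * x t i = ∑ i, ∑ j', x t i * B i j' * y t j' := by
      rw [Finset.sum_comm]
      exact Finset.sum_congr rfl fun i _ => Finset.sum_congr rfl fun j' _ => by ring
    rw [e1, e2] at h
    simp only [gg, uu]
    rw [h]
  -- positivity of the dissipation on K
  have hGnonnegK : ∀ q ∈ K, 0 ≤ Gv q := by
    intro q hq
    have n1 := GG1_nonneg β₁ w₁ α₁ φ q (fun i => (hKpos1 q hq i).le)
    have n2 := GG1_nonneg β₂ w₂ α₂ (fun j i => φ i j) q.swap (fun j => (hKpos2 q hq j).le)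
    simp only [hGvdef]
    exact add_nonneg (mul_nonneg (by positivity) n1) (mul_nonneg (by positivity) n2)
  -- continuity of the dissipation on K
  have hGca : ∀ q ∈ K, ContinuousAt Gv q := by
    intro q hq
    simp only [hGvdef]
    exact (continuousAt_const.mul
        (continuousAt_GG1 β₁ w₁ α₁ φ q (fun i => (hKpos1 q hq i).ne'))).add
      (continuousAt_const.mul
        (continuousAt_GG1_swap β₂ w₂ α₂ (fun j i => φ i j) q (fun j => (hKpos2 q hq j).ne')))
  -- continuity of the vector field on K
  have hFccont : ContinuousOn Fc K := by
    intro q hq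
    apply ContinuousAt.continuousWithinAt
    simp only [hFcdef]
    apply ContinuousAt.prodMk
    · exact continuousAt_pi.2 fun i => continuousAt_gg β₁ w₁ α₁ φ q
        (fun i => (hKpos1 q hq i).ne') i
    · exact continuousAt_pi.2 fun j => continuousAt_gg_swap β₂ w₂ α₂ (fun j i => φ i j) q
        (fun j => (hKpos2 q hq j).ne') j
  -- continuity of the potential on K
  have hVca : ∀ q ∈ K, ContinuousAt Vv q := by
    intro q hq
    simp only [hVvdef]
    apply ContinuousAt.sub
    apply ContinuousAt.sub
    · exact (continuous_const.mul (continuous_finset_sum _ fun i _ =>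
        continuous_finset_sum _ fun j _ =>
          (((continuous_apply i).comp continuous_fst).mul continuous_const).mul
            ((continuous_apply j).comp continuous_snd))).continuousAt
    · refine continuousAt_const.mul (tendsto_finset_sum _ fun i _ => ?_)
      have hc : ContinuousAt (fun q : (ι₁ → ℝ) × (ι₂ → ℝ) => q.1 i) q :=
        ((continuous_apply i).comp continuous_fst).continuousAt
      exact hc.mul (hc.log (hKpos1 q hq i).ne')
    · refine continuousAt_const.mul (tendsto_finset_sum _ fun j _ => ?_)
      have hc : ContinuousAt (fun q : (ι₁ → ℝ) × (ι₂ → ℝ) => q.2 j) q :=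
        ((continuous_apply j).comp continuous_snd).continuousAt
      exact hc.mul (hc.log (hKpos2 q hq j).ne')
  -- derivative of the curve
  have hzd : ∀ t, 0 < t → HasDerivAt (fun s => ((x s, y s) : (ι₁ → ℝ) × (ι₂ → ℝ)))
      (Fc (x t, y t)) t := by
    intro t ht
    have h1 : HasDerivAt (fun s => x s) (fun i => gg β₁ w₁ α₁ φ (x t, y t) i) t := by
      apply hasDerivAt_pi.2
      intro i
      have := hxd t i
      rwa [hodex' t ht.le i] at this
    have h2 : HasDerivAt (fun s => y s) (fun j => gg β₂ w₂ α₂ (fun j i => φ i j) (y t, x t) j)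
        t := by
      apply hasDerivAt_pi.2
      intro j
      have := hyd t j
      rwa [hodey' t ht.le j] at this
    have := h1.prodMk h2
    simp only [hFcdef]
    simpa [Prod.swap_prod_mk] using this
  -- derivative of the Lyapunov function along the curve
  have hWd : ∀ t, 0 < t → HasDerivAt (fun s => Vv (x s, y s)) (Gv (x t, y t)) t := by
    intro t ht
    have ht0 : (0 : ℝ) ≤ t := ht.le
    have hΦd : HasDerivAt (fun s => ∑ i, ∑ j, x s i * φ i j * y s j)
        (∑ i, ∑ j, (deriv (fun s => x s i) t * φ i j * y t j
          + x t i * φ i j * deriv (fun s => y s j) t)) t := by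
      apply HasDerivAt.fun_sum
      intro i _
      apply HasDerivAt.fun_sum
      intro j _
      exact ((hxd t i).mul_const (φ i j)).mul (hyd t j)
    have hH1d : HasDerivAt (fun s => ∑ i, x s i * Real.log (x s i))
        (∑ i, (deriv (fun s => x s i) t * Real.log (x t i) + deriv (fun s => x s i) t)) t := by
      apply HasDerivAt.fun_sum
      intro i _
      have hlog : HasDerivAt (fun s => Real.log (x s i))
          ((x t i)⁻¹ * deriv (fun s => x s i) t) t :=
        by have h := (Real.hasDerivAt_log (hxpos t ht0 i).ne').comp t (hxd t i); exact h
      have := (hxd t i).mul hlog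
      rwa [mul_inv_cancel_left₀ (hxpos t ht0 i).ne'] at this
    have hH2d : HasDerivAt (fun s => ∑ j, y s j * Real.log (y s j))
        (∑ j, (deriv (fun s => y s j) t * Real.log (y t j) + deriv (fun s => y s j) t)) t := by
      apply HasDerivAt.fun_sum
      intro j _
      have hlog : HasDerivAt (fun s => Real.log (y s j))
          ((y t j)⁻¹ * deriv (fun s => y s j) t) t :=
        by have h := (Real.hasDerivAt_log (hypos t ht0 j).ne').comp t (hyd t j); exact h
      have := (hyd t j).mul hlog
      rwa [mul_inv_cancel_left₀ (hypos t ht0 j).ne'] at this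
    have hd := ((hΦd.const_mul (β₁ * w₁ * (β₂ * w₂))).sub
        (hH1d.const_mul (α₁ * (β₂ * w₂)))).sub (hH2d.const_mul (α₂ * (β₁ * w₁)))
    -- identify the derivative with the dissipation
    have hval : Gv (x t, y t) =
        β₁ * w₁ * (β₂ * w₂) * (∑ i, ∑ j, (deriv (fun s => x s i) t * φ i j * y t j
            + x t i * φ i j * deriv (fun s => y s j) t))
          - α₁ * (β₂ * w₂) * (∑ i, (deriv (fun s => x s i) t * Real.log (x t i)
            + deriv (fun s => x s i) t))
          - α₂ * (β₁ * w₁) * (∑ j, (deriv (fun s => y s j) t * Real.log (y t j)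
            + deriv (fun s => y s j) t)) := by
      have hp1 : ∑ i, x t i = 1 := hxsum t ht0
      have hp2 : ∑ j, y t j = 1 := hysum t ht0
      simp only [hodex' t ht0, hodey' t ht0]
      -- abbreviations
      have hsx : ∑ i, gg β₁ w₁ α₁ φ (x t, y t) i = 0 := by
        simp only [gg]
        exact sum_center_zero (x t) (fun i => uu β₁ w₁ α₁ φ (x t, y t) i) hp1
      have hsy : ∑ j, gg β₂ w₂ α₂ (fun j i => φ i j) (y t, x t) j = 0 := by
        simp only [gg]
        exact sum_center_zero (y t) (fun j => uu β₂ w₂ α₂ (fun j i => φ i j) (y t, x t) j) hp2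
      have hsqx : ∑ i, gg β₁ w₁ α₁ φ (x t, y t) i * uu β₁ w₁ α₁ φ (x t, y t) i
          = GG1 β₁ w₁ α₁ φ (x t, y t) := by
        simp only [gg, GG1]
        exact sum_center_sq (x t) (fun i => uu β₁ w₁ α₁ φ (x t, y t) i) hp1
      have hsqy : ∑ j, gg β₂ w₂ α₂ (fun j i => φ i j) (y t, x t) j
            * uu β₂ w₂ α₂ (fun j i => φ i j) (y t, x t) j
          = GG1 β₂ w₂ α₂ (fun j i => φ i j) (y t, x t) := by
        simp only [gg, GG1]
        exact sum_center_sq (y t) (fun j => uu β₂ w₂ α₂ (fun j i => φ i j) (y t, x t) j) hp2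
      have split : (∑ i, ∑ j, (gg β₁ w₁ α₁ φ (x t, y t) i * φ i j * y t j
            + x t i * φ i j * gg β₂ w₂ α₂ (fun j i => φ i j) (y t, x t) j))
          = (∑ i, gg β₁ w₁ α₁ φ (x t, y t) i * ∑ j, φ i j * y t j)
            + ∑ j, gg β₂ w₂ α₂ (fun j i => φ i j) (y t, x t) j * ∑ i, φ i j * x t i := by
        rw [Finset.sum_congr rfl fun i _ => Finset.sum_add_distrib, Finset.sum_add_distrib]
        congr 1
        · refine Finset.sum_congr rfl fun i _ => ?_
          rw [Finset.mul_sum]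
          exact Finset.sum_congr rfl fun j _ => by ring
        · rw [Finset.sum_comm]
          refine Finset.sum_congr rfl fun j _ => ?_
          rw [Finset.mul_sum]
          exact Finset.sum_congr rfl fun i _ => by ring
      have euu : ∑ i, gg β₁ w₁ α₁ φ (x t, y t) i * uu β₁ w₁ α₁ φ (x t, y t) i
          = β₁ * w₁ * (∑ i, gg β₁ w₁ α₁ φ (x t, y t) i * ∑ j, φ i j * y t j)
            - α₁ * ∑ i, gg β₁ w₁ α₁ φ (x t, y t) i * Real.log (x t i) := by
        simp only [uu, mul_sub, Finset.sum_sub_distrib]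
        congr 1
        · rw [Finset.mul_sum]
          exact Finset.sum_congr rfl fun i _ => by ring
        · rw [Finset.mul_sum]
          exact Finset.sum_congr rfl fun i _ => by ring
      have evv : ∑ j, gg β₂ w₂ α₂ (fun j i => φ i j) (y t, x t) j
            * uu β₂ w₂ α₂ (fun j i => φ i j) (y t, x t) j
          = β₂ * w₂ * (∑ j, gg β₂ w₂ α₂ (fun j i => φ i j) (y t, x t) j * ∑ i, φ i j * x t i)
            - α₂ * ∑ j, gg β₂ w₂ α₂ (fun j i => φ i j) (y t, x t) j * Real.log (y t j) := by
        simp only [uu, mul_sub, Finset.sum_sub_distrib]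
        congr 1
        · rw [Finset.mul_sum]
          exact Finset.sum_congr rfl fun j _ => by ring
        · rw [Finset.mul_sum]
          exact Finset.sum_congr rfl fun j _ => by ring
      have e1 : (∑ i, (gg β₁ w₁ α₁ φ (x t, y t) i * Real.log (x t i)
            + gg β₁ w₁ α₁ φ (x t, y t) i))
          = (∑ i, gg β₁ w₁ α₁ φ (x t, y t) i * Real.log (x t i))
            + ∑ i, gg β₁ w₁ α₁ φ (x t, y t) i := Finset.sum_add_distrib
      have e2 : (∑ j, (gg β₂ w₂ α₂ (fun j i => φ i j) (y t, x t) j * Real.log (y t j)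
            + gg β₂ w₂ α₂ (fun j i => φ i j) (y t, x t) j))
          = (∑ j, gg β₂ w₂ α₂ (fun j i => φ i j) (y t, x t) j * Real.log (y t j))
            + ∑ j, gg β₂ w₂ α₂ (fun j i => φ i j) (y t, x t) j := Finset.sum_add_distrib
      simp only [hGvdef]
      simp only [Prod.swap_prod_mk]
      rw [← hsqx, ← hsqy, euu, evv, split, e1, e2, hsx, hsy]
      ring
    rw [hval]
    exact hd
  -- monotonicity of the Lyapunov function
  have hGnonneg : ∀ t, 0 ≤ t → 0 ≤ Gv (x t, y t) := fun t ht => hGnonnegK _ (hzK t ht)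
  have hWmono : MonotoneOn (fun t => Vv (x t, y t)) (Set.Ici (1 : ℝ)) := by
    apply monotoneOn_of_deriv_nonneg (convex_Ici 1)
    · intro t ht
      exact ((hWd t (lt_of_lt_of_le zero_lt_one ht)).continuousAt).continuousWithinAt
    · intro t ht
      rw [interior_Ici] at ht
      exact ((hWd t (lt_trans zero_lt_one ht)).differentiableAt).differentiableWithinAt
    · intro t ht
      rw [interior_Ici] at ht
      have ht' : (1 : ℝ) < t := ht
      rw [(hWd t (lt_trans zero_lt_one ht)).deriv]
      exact hGnonneg t (by linarith)
  -- boundedness of the Lyapunov function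
  obtain ⟨C, hC⟩ := hKcomp.exists_bound_of_continuousOn
    (fun q hq => ((hVca q hq).continuousWithinAt : ContinuousWithinAt Vv K q))
  have hCb : ∀ t, 0 ≤ t → Vv (x t, y t) ≤ C := fun t ht =>
    le_trans (le_abs_self _) (by simpa [Real.norm_eq_abs] using hC _ (hzK t ht))
  -- convergence of the Lyapunov function
  obtain ⟨L, hL⟩ : ∃ L, Tendsto (fun t => Vv (x t, y t)) atTop (nhds L) := by
    have hmono : Monotone fun t => Vv (x (max 1 t), y (max 1 t)) := fun s t hst =>
      hWmono (le_max_left 1 s) (le_max_left 1 t) (max_le_max le_rfl hst)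
    have hbdd : BddAbove (Set.range fun t => Vv (x (max 1 t), y (max 1 t))) := by
      refine ⟨C, ?_⟩
      rintro _ ⟨t, rfl⟩
      exact hCb _ (le_trans zero_le_one (le_max_left 1 t))
    refine ⟨⨆ t, Vv (x (max 1 t), y (max 1 t)), ?_⟩
    refine (tendsto_atTop_ciSup hmono hbdd).congr' ?_
    filter_upwards [eventually_ge_atTop (1 : ℝ)] with t ht
    rw [max_eq_right ht]
  -- the dissipation vanishes on the ω-limit set
  have hGzero : ∀ q ∈ curveOmegaLimit (fun t => ((x t, y t) : (ι₁ → ℝ) × (ι₂ → ℝ))),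
      Gv q = 0 := by
    intro q hqΩ
    have hqK := hΩK hqΩ
    by_contra hne0
    have hc : 0 < Gv q := lt_of_le_of_ne (hGnonnegK q hqK) (Ne.symm hne0)
    obtain ⟨r, hr, hball⟩ := Metric.eventually_nhds_iff.1
      ((hGca q hqK).eventually (eventually_gt_nhds (half_lt_self hc)))
    obtain ⟨M, hM⟩ := hKcomp.exists_bound_of_continuousOn hFccont
    set M' := max M 1 with hM'def
    have hM'pos : (0 : ℝ) < M' := lt_of_lt_of_le zero_lt_one (le_max_right M 1)
    set δ := r / (2 * M') with hδdef
    have hδpos : 0 < δ := by positivity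
    have hM'δ : M' * δ = r / 2 := by
      rw [hδdef]
      field_simp
    -- frequently the trajectory visits the small ball
    have hfreq : ∃ᶠ t in atTop, ((x t, y t) : (ι₁ → ℝ) × (ι₂ → ℝ)) ∈ Metric.ball q (r / 2) := by
      have h := (mem_omegaLimit_iff_frequently atTop
        (fun t (_ : Unit) => ((x t, y t) : (ι₁ → ℝ) × (ι₂ → ℝ))) Set.univ q).1 hqΩ
        (Metric.ball q (r / 2)) (Metric.ball_mem_nhds q (by positivity))
      refine h.mono ?_
      rintro t ⟨u, -, hu⟩
      exact hu
    -- eventual closeness of the Lyapunov values to the limit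
    have hev : ∀ᶠ t in atTop, |Vv (x t, y t) - L| < Gv q * δ / 4 := by
      have h := Metric.tendsto_nhds.1 hL (Gv q * δ / 4) (by positivity)
      exact h.mono fun t ht => by rwa [Real.dist_eq] at ht
    obtain ⟨T, hT⟩ := eventually_atTop.1 hev
    obtain ⟨t₀, ht₀ge, hball0⟩ := (frequently_atTop.1 hfreq) (max T 1)
    have ht₀1 : (1 : ℝ) ≤ t₀ := le_trans (le_max_right T 1) ht₀ge
    have ht₀T : T ≤ t₀ := le_trans (le_max_left T 1) ht₀ge
    have ht₀pos : (0 : ℝ) < t₀ := lt_of_lt_of_le zero_lt_one ht₀1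
    -- on [t₀, t₀ + δ] the trajectory stays in the big ball
    have hclose : ∀ s ∈ Set.Icc t₀ (t₀ + δ),
        ((x s, y s) : (ι₁ → ℝ) × (ι₂ → ℝ)) ∈ Metric.ball q r := by
      intro s hs
      have hseg : ∀ u ∈ Set.Icc t₀ (t₀ + δ),
          HasDerivWithinAt (fun s => ((x s, y s) : (ι₁ → ℝ) × (ι₂ → ℝ)))
            (Fc (x u, y u)) (Set.Icc t₀ (t₀ + δ)) u := fun u hu =>
        (hzd u (lt_of_lt_of_le ht₀pos hu.1)).hasDerivWithinAt
      have hbound : ∀ u ∈ Set.Ico t₀ (t₀ + δ), ‖Fc (x u, y u)‖ ≤ M' := fun u hu =>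
        le_trans (hM _ (hzK u (by linarith [hu.1]))) (le_max_left M 1)
      have hest := norm_image_sub_le_of_norm_deriv_le_segment' hseg hbound s hs
      rw [Metric.mem_ball]
      have hd1 : dist ((x s, y s) : (ι₁ → ℝ) × (ι₂ → ℝ)) ((x t₀, y t₀) : (ι₁ → ℝ) × (ι₂ → ℝ))
          ≤ M' * (s - t₀) := by
        rw [dist_eq_norm]
        exact hest
      have hd2 : dist ((x t₀, y t₀) : (ι₁ → ℝ) × (ι₂ → ℝ)) q < r / 2 := Metric.mem_ball.1 hball0
      have hd3 : M' * (s - t₀) ≤ M' * δ := by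
        apply mul_le_mul_of_nonneg_left _ hM'pos.le
        linarith [hs.2]
      calc dist ((x s, y s) : (ι₁ → ℝ) × (ι₂ → ℝ)) q
          ≤ dist ((x s, y s) : (ι₁ → ℝ) × (ι₂ → ℝ)) ((x t₀, y t₀) : (ι₁ → ℝ) × (ι₂ → ℝ))
            + dist ((x t₀, y t₀) : (ι₁ → ℝ) × (ι₂ → ℝ)) q := dist_triangle _ _ _
        _ < M' * δ + r / 2 := by
            have := lt_of_le_of_lt (add_le_add_left (le_trans hd1 hd3) _)
              (add_lt_add_right hd2 _)
            exact this
        _ = r := by rw [hM'δ]; ring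
    -- strict increase of the Lyapunov function on the interval
    have hinc : Gv q / 2 * δ ≤ Vv (x (t₀ + δ), y (t₀ + δ)) - Vv (x t₀, y t₀) := by
      have h := (convex_Icc t₀ (t₀ + δ)).mul_sub_le_image_sub_of_le_deriv
        (f := fun t => Vv (x t, y t))
        (fun s hs => ((hWd s (lt_of_lt_of_le ht₀pos hs.1)).continuousAt).continuousWithinAt)
        (by
          intro s hs
          rw [interior_Icc] at hs
          exact ((hWd s (lt_of_lt_of_le ht₀pos hs.1.le)).differentiableAt).differentiableWithinAt)
        (C := Gv q / 2)
        (by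
          intro s hs
          rw [interior_Icc] at hs
          rw [(hWd s (lt_of_lt_of_le ht₀pos hs.1.le)).deriv]
          exact (hball (Metric.mem_ball.1 (hclose s (Set.Ioo_subset_Icc_self hs)))).le)
        t₀ (Set.left_mem_Icc.2 (by linarith)) (t₀ + δ)
        (Set.right_mem_Icc.2 (by linarith)) (by linarith)
      calc Gv q / 2 * δ = Gv q / 2 * (t₀ + δ - t₀) := by ring_nf
        _ ≤ _ := h
    have h1 := hT t₀ ht₀T
    have h2 := hT (t₀ + δ) (by linarith)
    rw [abs_lt] at h1 h2
    have : Vv (x (t₀ + δ), y (t₀ + δ)) - Vv (x t₀, y t₀) < Gv q / 2 * δ := by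
      have hh : Gv q / 2 * δ = Gv q * δ / 4 + Gv q * δ / 4 := by ring
      rw [hh]
      linarith [h1.1, h1.2, h2.1, h2.2]
    linarith
  -- ===== extraction of the QRE equations =====
  refine ⟨hΩne, hΩcomp, hΩconn, ?_⟩
  intro q hqΩ
  have hqK := hΩK hqΩ
  have hG0 := hGzero q hqΩ
  simp only [hGvdef] at hG0
  have n1 := GG1_nonneg β₁ w₁ α₁ φ q (fun i => (hKpos1 q hqK i).le)
  have n2 := GG1_nonneg β₂ w₂ α₂ (fun j i => φ i j) q.swap (fun j => (hKpos2 q hqK j).le)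
  have hb2w2 : 0 < β₂ * w₂ := mul_pos hβ₂ hw₂
  have hb1w1 : 0 < β₁ * w₁ := mul_pos hβ₁ hw₁
  have hS1 : GG1 β₁ w₁ α₁ φ q = 0 := by nlinarith
  have hS2 : GG1 β₂ w₂ α₂ (fun j i => φ i j) q.swap = 0 := by nlinarith
  simp only [GG1] at hS1 hS2
  have hterm1 : ∀ i, uu β₁ w₁ α₁ φ q i - ∑ i', q.1 i' * uu β₁ w₁ α₁ φ q i' = 0 := by
    intro i
    have hz := (Finset.sum_eq_zero_iff_of_nonneg
      (fun i _ => mul_nonneg (hKpos1 q hqK i).le (sq_nonneg _))).1 hS1 i (Finset.mem_univ i)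
    exact sq_eq_zero_iff.1 ((mul_eq_zero.1 hz).resolve_left (hKpos1 q hqK i).ne')
  have hterm2 : ∀ j, uu β₂ w₂ α₂ (fun j i => φ i j) q.swap j
      - ∑ j', q.swap.1 j' * uu β₂ w₂ α₂ (fun j i => φ i j) q.swap j' = 0 := by
    intro j
    have hz := (Finset.sum_eq_zero_iff_of_nonneg
      (fun j _ => mul_nonneg (hKpos2 q hqK j).le (sq_nonneg _))).1 hS2 j (Finset.mem_univ j)
    exact sq_eq_zero_iff.1 ((mul_eq_zero.1 hz).resolve_left (hKpos2 q hqK j).ne')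
  constructor
  · intro i
    have hpg := player_g_form β₁ w₁ α₁ A φ q.1 q.2 (hKsum1 q hqK) hpotA i
    have hc := hterm1 i
    simp only [uu] at hc
    linarith [hpg, hc]
  · intro j
    have hpg := player_g_form β₂ w₂ α₂ (fun j i => B i j) (fun j i => φ i j) q.2 q.1
      (hKsum2 q hqK) (fun j j' i => hpotB i j j') j
    have e1 : ∑ i, B i j * q.1 i = ∑ i, q.1 i * B i j :=
      Finset.sum_congr rfl fun i _ => mul_comm _ _
    have e2 : ∑ j', ∑ i, q.2 j' * B i j' * q.1 i = ∑ i, ∑ j', q.1 i * B i j' * q.2 j' := by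
      rw [Finset.sum_comm]
      exact Finset.sum_congr rfl fun i _ => Finset.sum_congr rfl fun j' _ => by ring
    rw [e1, e2] at hpg
    have hc := hterm2 j
    simp only [uu, Prod.fst_swap, Prod.snd_swap] at hc
    linarith [hpg, hc]
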